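/- arXiv:2212.12821 — 4 statements merged into one kernel-verified Lean document; each statement's English description precedes it below -/
import Mathlib

section
/- For 1<p<∞ and 1 ≤ r ≤ min{2,p}, the function t ↦ V_p(t^{1/r}) is convex on [0,∞). Moreover, this fails for r > min{2,p}: the infimum over ξ>0 of ξV_p''(ξ)/V_p'(ξ) = ((p-1)ξ^2+1)/(ξ^2+1) equals min{p,2} - 1. -/
noncomputable def Vp (p t : ℝ) : ℝ := (1 + t ^ 2) ^ (p / 2) - 1

open Set Real

private lemma convexOn_congr' {f g : ℝ → ℝ} {s : Set ℝ} (hf : ConvexOn ℝ s f)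
    (h : ∀ x ∈ s, f x = g x) : ConvexOn ℝ s g := by
  refine ⟨hf.1, fun x hx y hy a b ha hb hab => ?_⟩
  rw [← h _ hx, ← h _ hy, ← h _ (hf.1 hx hy ha hb hab)]
  exact hf.2 hx hy ha hb hab

/-- `N t = (1 + t ^ α) ^ α⁻¹` is convex on `[0, ∞)` for `α ≥ 1` (ℓ^α norm of `(1, t)`). -/
private lemma convexOn_N {α : ℝ} (hα : 1 ≤ α) :
    ConvexOn ℝ (Ici 0) (fun t : ℝ => (1 + t ^ α) ^ α⁻¹) := by
  have hα0 : α ≠ 0 := by linarith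
  refine ⟨convex_Ici 0, fun x hx y hy a b ha hb hab => ?_⟩
  simp only [smul_eq_mul] at *
  have hx0 : (0:ℝ) ≤ x := hx
  have hy0 : (0:ℝ) ≤ y := hy
  have key := Real.Lp_add_le_of_nonneg (s := Finset.univ) (f := ![a, a*x]) (g := ![b, b*y])
      hα ?_ ?_
  · rw [Fin.sum_univ_two, Fin.sum_univ_two, Fin.sum_univ_two] at key
    simp only [Matrix.cons_val_zero, Matrix.cons_val_one, Matrix.head_cons] at key
    rw [hab] at key
    have e1 : (1:ℝ) ^ α = 1 := Real.one_rpow α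
    rw [e1] at key
    have fa : (a ^ α + (a*x) ^ α) ^ (1/α) = a * (1 + x ^ α) ^ (1/α) := by
      rw [Real.mul_rpow ha hx0]
      rw [show a ^ α + a ^ α * x ^ α = a ^ α * (1 + x ^ α) by ring]
      rw [Real.mul_rpow (by positivity) (by positivity), one_div,
        Real.rpow_rpow_inv ha hα0]
    have fb : (b ^ α + (b*y) ^ α) ^ (1/α) = b * (1 + y ^ α) ^ (1/α) := by
      rw [Real.mul_rpow hb hy0]
      rw [show b ^ α + b ^ α * y ^ α = b ^ α * (1 + y ^ α) by ring]
      rw [Real.mul_rpow (by positivity) (by positivity), one_div,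
        Real.rpow_rpow_inv hb hα0]
    rw [fa, fb, one_div] at key
    exact key
  · intro i _; fin_cases i <;> simp <;> positivity
  · intro i _; fin_cases i <;> simp <;> positivity

theorem stmt_2 (p r : ℝ) (hp : 1 < p) (hr1 : 1 ≤ r) (hr2 : r ≤ min 2 p) :
    ConvexOn ℝ (Set.Ici 0) (fun t : ℝ => Vp p (t ^ (1 / r))) ∧
    IsGLB {y : ℝ | ∃ ξ : ℝ, 0 < ξ ∧ y = ((p - 1) * ξ ^ 2 + 1) / (ξ ^ 2 + 1)}
      (min p 2 - 1) := by
  have hr0 : (0:ℝ) < r := lt_of_lt_of_le one_pos hr1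
  have hr2' : r ≤ 2 := le_trans hr2 (min_le_left _ _)
  have hrp : r ≤ p := le_trans hr2 (min_le_right _ _)
  constructor
  · -- Convexity
    set α : ℝ := 2 / r with hαdef
    have hα1 : 1 ≤ α := (one_le_div hr0).2 hr2'
    have hα0 : α ≠ 0 := by positivity
    have hainv : α⁻¹ = r / 2 := by rw [hαdef]; field_simp
    have hN := convexOn_N hα1
    have hNnn : ∀ t ∈ Ici (0:ℝ), (0:ℝ) ≤ (1 + t ^ α) ^ α⁻¹ := by
      intro t ht
      have : (0:ℝ) ≤ t := ht
      positivity
    have hF : ConvexOn ℝ (Ici 0) (fun x : ℝ => x ^ (p / r)) :=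
      convexOn_rpow ((one_le_div hr0).2 hrp)
    have hFmono : MonotoneOn (fun x : ℝ => x ^ (p / r)) (Ici 0) := by
      intro x hx y hy hxy
      exact Real.rpow_le_rpow hx hxy (by positivity)
    -- composition
    have hcomp : ConvexOn ℝ (Ici 0)
        (fun t : ℝ => ((1 + t ^ α) ^ α⁻¹) ^ (p / r)) := by
      refine ⟨convex_Ici 0, fun x hx y hy a b ha hb hab => ?_⟩
      have hmem : a • x + b • y ∈ Ici (0:ℝ) := (convex_Ici 0) hx hy ha hb hab
      have h1 := hN.2 hx hy ha hb hab
      have h2 := hFmono (hNnn _ hmem)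
        (by
          have h1' := hNnn _ hx; have h2' := hNnn _ hy
          simp only [smul_eq_mul, Set.mem_Ici] at *
          positivity) h1
      refine h2.trans ?_
      exact hF.2 (hNnn _ hx) (hNnn _ hy) ha hb hab
    have := (hcomp.sub (concaveOn_const 1 (convex_Ici 0)))
    refine convexOn_congr' this ?_
    intro t ht
    have ht0 : (0:ℝ) ≤ t := ht
    have h1 : ((1:ℝ) + t ^ α) ^ α⁻¹ = (1 + t ^ α) ^ (r/2) := by rw [hainv]
    have base : (0:ℝ) ≤ 1 + t ^ α := by positivity
    have h2 : (((1:ℝ) + t ^ α) ^ (r/2)) ^ (p / r) = (1 + t ^ α) ^ (p/2) := by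
      rw [← Real.rpow_mul base]
      congr 1
      field_simp
    have h3 : (t ^ (1/r)) ^ 2 = t ^ α := by
      rw [← Real.rpow_natCast (t ^ (1/r)) 2, ← Real.rpow_mul ht0]
      congr 1
      push_cast
      rw [hαdef]; ring
    simp only [Pi.sub_apply, Vp, h3, h1, h2]
  · -- IsGLB
    constructor
    · rintro y ⟨ξ, hξ, rfl⟩
      rw [le_div_iff₀ (by positivity)]
      rcases le_total p 2 with h | h
      · rw [min_eq_left h]; nlinarith
      · rw [min_eq_right h]; nlinarith
    · intro b hb
      by_contra hcon
      push_neg at hcon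
      set m := min p 2 - 1 with hm
      set ε := (b - m) / 2 with hε
      have hε0 : 0 < ε := by simp [hε]; linarith
      rcases le_total p 2 with h | h
      · -- min = p, take ξ large
        have hmp : m = p - 1 := by rw [hm, min_eq_left h]
        set ξ := max 1 ((2 - p) / ε) with hξdef
        have hξ1 : (1:ℝ) ≤ ξ := le_max_left _ _
        have hξ0 : (0:ℝ) < ξ := lt_of_lt_of_le one_pos hξ1
        have hξb : (2 - p) / ε ≤ ξ := le_max_right _ _
        have hsq : (2 - p) / ε ≤ ξ ^ 2 := le_trans hξb (by nlinarith)
        have hkey : ((p - 1) * ξ ^ 2 + 1) / (ξ ^ 2 + 1) ≤ m + ε := by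
          rw [div_le_iff₀ (by positivity), hmp]
          have h2 : 2 - p ≤ ε * ξ ^ 2 := by
            rw [div_le_iff₀ hε0] at hsq; linarith [hsq]
          nlinarith
        have := hb ⟨ξ, hξ0, rfl⟩
        have : b ≤ m + ε := le_trans this hkey
        rw [hε] at this; linarith
      · -- min = 2, take ξ small
        have hmp : m = 1 := by rw [hm, min_eq_right h]; ring
        rcases eq_or_lt_of_le h with h2 | h2
        · -- p = 2 : any ξ works, value is 1 = m
          have := hb ⟨1, one_pos, rfl⟩
          rw [← h2] at this
          norm_num at this
          rw [hmp] at hcon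
          linarith
        · set ξ := min 1 (ε / (p - 2)) with hξdef
          have hq : 0 < ε / (p - 2) := div_pos hε0 (by linarith)
          have hξ0 : (0:ℝ) < ξ := lt_min one_pos hq
          have hξ1 : ξ ≤ 1 := min_le_left _ _
          have hξe : ξ ≤ ε / (p - 2) := min_le_right _ _
          have h3 : (p - 2) * ξ ≤ ε := by
            rw [le_div_iff₀ (by linarith)] at hξe; linarith [hξe]
          have hkey : ((p - 1) * ξ ^ 2 + 1) / (ξ ^ 2 + 1) ≤ m + ε := by
            rw [div_le_iff₀ (by positivity), hmp]
            nlinarith [sq_nonneg ξ, hξ0.le]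
          have := hb ⟨ξ, hξ0, rfl⟩
          have : b ≤ m + ε := le_trans this hkey
          rw [hε] at this; linarith
end

section
/- For 1<p<∞ and z ≠ 0 in a normed space X, one has V_{p'}(V_p(z)/|z|) ≤ C(p) V_p(z), where p' = p/(p-1) is the Hölder conjugate exponent. -/
lemma pow_le_one_add (n : ℕ) {a : ℝ} (ha : 1 ≤ a) : a ^ n ≤ 1 + n * a ^ n * (a - 1) := by
  induction n with
  | zero => simp
  | succ k ih =>
    have ha0 : (0:ℝ) ≤ a := by linarith
    have hak1 : (1:ℝ) ≤ a ^ (k+1) := one_le_pow₀ ha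
    have h5 : a * a ^ k ≤ a * (1 + (k:ℝ) * a ^ k * (a - 1)) :=
      mul_le_mul_of_nonneg_left ih ha0
    have h6 : (a - 1) * 1 ≤ (a - 1) * a ^ (k+1) :=
      mul_le_mul_of_nonneg_left hak1 (by linarith)
    have h : a ^ (k+1) = a * a ^ k := by ring
    push_cast
    nlinarith [h5, h6]

lemma rpow_upper {B u : ℝ} (α : ℝ) (hu : 0 ≤ u) (huB : u ≤ B) :
    (1 + u) ^ α ≤ 1 + (⌈α⌉₊ : ℝ) * (1 + B) ^ (⌈α⌉₊ : ℕ) * u := by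
  have h1 : (1:ℝ) ≤ 1 + u := by linarith
  have h2 : (1+u) ^ α ≤ (1+u) ^ (⌈α⌉₊ : ℝ) := Real.rpow_le_rpow_of_exponent_le h1 (Nat.le_ceil α)
  rw [Real.rpow_natCast] at h2
  have h3 := pow_le_one_add ⌈α⌉₊ h1
  have h4 : (1+u) ^ (⌈α⌉₊ : ℕ) ≤ (1+B) ^ (⌈α⌉₊ : ℕ) :=
    pow_le_pow_left₀ (by linarith) (by linarith) _
  have hn : (0:ℝ) ≤ (⌈α⌉₊ : ℝ) := Nat.cast_nonneg _
  nlinarith [h2, h3, h4, mul_le_mul_of_nonneg_left h4 hn]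

set_option maxHeartbeats 1000000 in
lemma key (p : ℝ) (hp : 1 < p) :
    ∃ C : ℝ, 0 < C ∧ ∀ t : ℝ, 0 < t →
      Vp (p / (p - 1)) (Vp p t / t) ≤ C * Vp p t := by
  have hp0 : (0:ℝ) < p - 1 := by linarith
  obtain ⟨q, hqdef⟩ : ∃ q : ℝ, q = p / (p - 1) := ⟨_, rfl⟩
  rw [← hqdef]
  have hq0 : 0 < q := hqdef ▸ div_pos (by linarith) hp0
  have hpq : (p - 1) * q = p := by rw [hqdef]; field_simp
  obtain ⟨K, hK0, hKup⟩ : ∃ K : ℝ, 0 ≤ K ∧ ∀ u : ℝ, 0 ≤ u → u ≤ 1 →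
      (1 + u) ^ (p/2) - 1 ≤ K * u := by
    refine ⟨(⌈p/2⌉₊ : ℝ) * 2 ^ ⌈p/2⌉₊, by positivity, fun u hu hu1 => ?_⟩
    have h := rpow_upper (B := 1) (p/2) hu hu1
    norm_num at h
    linarith
  obtain ⟨M, hM0, hMup⟩ : ∃ M : ℝ, 0 ≤ M ∧ ∀ u : ℝ, 0 ≤ u → u ≤ K ^ 2 →
      (1 + u) ^ (q/2) - 1 ≤ M * u := by
    refine ⟨(⌈q/2⌉₊ : ℝ) * (1 + K ^ 2) ^ ⌈q/2⌉₊, by positivity, fun u hu huK => ?_⟩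
    have h := rpow_upper (B := K ^ 2) (q/2) hu huK
    linarith
  obtain ⟨E, hEdef⟩ : ∃ E : ℝ, E = (2:ℝ) ^ (p/2) := ⟨_, rfl⟩
  have hE0 : 0 < E := hEdef ▸ Real.rpow_pos_of_pos (by norm_num) _
  obtain ⟨D, hDdef⟩ : ∃ D : ℝ, D = (1 + E) ^ q := ⟨_, rfl⟩
  have hD0 : 0 < D := hDdef ▸ Real.rpow_pos_of_pos (by positivity) _
  refine ⟨3 * M * K ^ 2 + 4 * D, by positivity, ?_⟩
  intro t ht
  have ht0 : (0:ℝ) ≤ t := ht.le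
  have h1t : (1:ℝ) ≤ 1 + t ^ 2 := by nlinarith
  simp only [Vp]
  obtain ⟨A, hA⟩ : ∃ A : ℝ, A = (1 + t ^ 2) ^ (p/2) - 1 := ⟨_, rfl⟩
  rw [← hA]
  have hA0 : 0 ≤ A := by
    rw [hA]
    have := Real.one_le_rpow h1t (by positivity : (0:ℝ) ≤ p / 2)
    linarith
  obtain ⟨s, hs⟩ : ∃ s : ℝ, s = A / t := ⟨_, rfl⟩
  rw [← hs]
  have hs0 : 0 ≤ s := hs ▸ div_nonneg hA0 ht0
  rcases le_total t 1 with htle | htge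
  · -- small t
    have ht2 : t ^ 2 ≤ 1 := by nlinarith
    have hAub : A ≤ K * t ^ 2 := by
      have h := hKup (t ^ 2) (by positivity) ht2
      rw [hA]; linarith
    have hAlb : t ^ 2 ≤ 3 * A := by
      have hsq : (1 + t ^ 2) ^ ((1:ℝ) / 2) ≤ (1 + t ^ 2) ^ (p / 2) :=
        Real.rpow_le_rpow_of_exponent_le h1t (by linarith)
      have hsqrt : 1 + t ^ 2 / 3 ≤ (1 + t ^ 2) ^ ((1:ℝ) / 2) := by
        rw [← Real.sqrt_eq_rpow]
        rw [show (1:ℝ) + t ^ 2 / 3 = Real.sqrt ((1 + t ^ 2 / 3) ^ 2) from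
          (Real.sqrt_sq (by positivity)).symm]
        apply Real.sqrt_le_sqrt
        nlinarith
      rw [hA]; linarith
    have hsK : s ≤ K * t := by
      rw [hs, div_le_iff₀ ht]
      calc A ≤ K * t ^ 2 := hAub
        _ = K * t * t := by ring
    have hsK1 : s ≤ K := by nlinarith
    have hs2 : s ^ 2 ≤ K ^ 2 := by nlinarith
    have hVub : (1 + s ^ 2) ^ (q/2) - 1 ≤ M * s ^ 2 := hMup (s ^ 2) (by positivity) hs2
    have hs2t : s ^ 2 ≤ K ^ 2 * t ^ 2 := by nlinarith
    calc (1 + s ^ 2) ^ (q/2) - 1 ≤ M * s ^ 2 := hVub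
      _ ≤ M * (K ^ 2 * t ^ 2) := mul_le_mul_of_nonneg_left hs2t hM0
      _ ≤ M * (K ^ 2 * (3 * A)) := by
          apply mul_le_mul_of_nonneg_left _ hM0
          apply mul_le_mul_of_nonneg_left hAlb (by positivity)
      _ = 3 * M * K ^ 2 * A := by ring
      _ ≤ (3 * M * K ^ 2 + 4 * D) * A := by nlinarith
  · -- large t
    have ht1 : (1:ℝ) ≤ t := htge
    obtain ⟨B, hB⟩ : ∃ B : ℝ, B = (1 + t ^ 2) ^ (p/2) := ⟨_, rfl⟩
    have hB0 : 0 < B := hB ▸ Real.rpow_pos_of_pos (by positivity) _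
    have hAB : A = B - 1 := by rw [hA, hB]
    have htp : t ^ p = (t ^ 2) ^ (p / 2) := by
      rw [← Real.rpow_natCast t 2, ← Real.rpow_mul ht0]
      congr 1
      push_cast
      ring
    have htpB : t ^ p ≤ B := by
      rw [htp, hB]
      exact Real.rpow_le_rpow (by positivity) (by linarith) (by positivity)
    have hB2 : 2 ≤ B ^ 2 := by
      have hBB : B ^ 2 = (1 + t ^ 2) ^ p := by
        rw [hB, ← Real.rpow_natCast _ 2, ← Real.rpow_mul (by positivity)]
        congr 1
        push_cast
        ring
      rw [hBB]
      calc (2:ℝ) = 2 ^ (1:ℝ) := by norm_num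
        _ ≤ 2 ^ p := Real.rpow_le_rpow_of_exponent_le (by norm_num) (by linarith)
        _ ≤ (1 + t ^ 2) ^ p := Real.rpow_le_rpow (by norm_num) (by nlinarith) (by linarith)
    have hB43 : (4:ℝ)/3 ≤ B := by nlinarith
    have htpA : t ^ p ≤ 4 * A := by rw [hAB]; nlinarith
    have hBub : B ≤ E * t ^ p := by
      rw [htp, hB, hEdef]
      calc (1 + t ^ 2) ^ (p / 2) ≤ (2 * t ^ 2) ^ (p / 2) :=
            Real.rpow_le_rpow (by positivity) (by nlinarith) (by positivity)
        _ = 2 ^ (p/2) * (t ^ 2) ^ (p / 2) := Real.mul_rpow (by norm_num) (by positivity)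
    have htp1 : (1:ℝ) ≤ t ^ (p - 1) := Real.one_le_rpow ht1 (by linarith)
    have hss : s ≤ E * t ^ (p - 1) := by
      rw [hs, div_le_iff₀ ht]
      have h2 : t ^ (p - 1) * t = t ^ p := by
        nth_rewrite 2 [← Real.rpow_one t]
        rw [← Real.rpow_add ht]
        norm_num
      have hAB' : A ≤ B := by rw [hAB]; linarith
      calc A ≤ B := hAB'
        _ ≤ E * t ^ p := hBub
        _ = E * t ^ (p - 1) * t := by rw [← h2]; ring
    have hVub : (1 + s ^ 2) ^ (q/2) - 1 ≤ (1 + s) ^ q := by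
      have h1 : (1 + s ^ 2) ^ (q / 2) ≤ ((1 + s) ^ (2:ℕ)) ^ (q / 2) :=
        Real.rpow_le_rpow (by positivity) (by nlinarith) (by positivity)
      have h2 : ((1 + s) ^ (2:ℕ)) ^ (q / 2) = (1 + s) ^ q := by
        rw [← Real.rpow_natCast (1+s) 2, ← Real.rpow_mul (by linarith)]
        congr 1
        push_cast
        ring
      rw [h2] at h1
      linarith
    have hfin : (1 + s) ^ q ≤ D * t ^ p := by
      have h1 : 1 + s ≤ (1 + E) * t ^ (p - 1) := by nlinarith
      calc (1 + s) ^ q ≤ ((1 + E) * t ^ (p - 1)) ^ q :=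
            Real.rpow_le_rpow (by linarith) h1 hq0.le
        _ = (1 + E) ^ q * (t ^ (p-1)) ^ q := Real.mul_rpow (by positivity) (by positivity)
        _ = D * t ^ p := by rw [hDdef, ← Real.rpow_mul ht0, hpq]
    calc (1 + s ^ 2) ^ (q/2) - 1 ≤ (1 + s) ^ q := hVub
      _ ≤ D * t ^ p := hfin
      _ ≤ D * (4 * A) := mul_le_mul_of_nonneg_left htpA hD0.le
      _ = 4 * D * A := by ring
      _ ≤ (3 * M * K ^ 2 + 4 * D) * A := by
          nlinarith [mul_nonneg (mul_nonneg hM0 (sq_nonneg K)) hA0]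

theorem stmt_3 (p : ℝ) (hp : 1 < p) :
    ∃ C : ℝ, 0 < C ∧
      ∀ (X : Type) [NormedAddCommGroup X], ∀ z : X, z ≠ 0 →
        Vp (p / (p - 1)) (Vp p ‖z‖ / ‖z‖) ≤ C * Vp p ‖z‖ := by
  obtain ⟨C, hC, h⟩ := key p hp
  exact ⟨C, hC, fun X _ z hz => h ‖z‖ (norm_pos_iff.mpr hz)⟩
end

section
/- For 1<p<∞ and t ≥ 0, one has V_{p'}(V_p'(t)) ≤ C(p) V_p(t), where V_p'(t) = p t (1+t^2)^{(p-2)/2} is the derivative of V_p. -/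
lemma bern_aux (r A : ℝ) (hr : 0 ≤ r) (hA : 0 ≤ A) :
    (1 + A) ^ r - 1 ≤ r * A * (1 + A) ^ r := by
  have h1 : (0:ℝ) < 1 + A := by linarith
  have hP : (0:ℝ) ≤ (1 + A) ^ r := Real.rpow_nonneg h1.le r
  rcases le_or_gt 1 (r * A) with h | h
  · nlinarith
  · have hexp : (1 + A) ^ r ≤ Real.exp (r * A) := by
      rw [Real.rpow_def_of_pos h1]
      apply Real.exp_le_exp.2
      have := Real.log_le_sub_one_of_pos h1
      nlinarith [Real.log_nonneg (by linarith : (1:ℝ) ≤ 1 + A)]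
    have h2 : Real.exp (r * A) * (1 - r * A) ≤ 1 := by
      have := Real.add_one_le_exp (-(r * A))
      have h3 : Real.exp (r * A) * Real.exp (-(r * A)) = 1 := by
        rw [← Real.exp_add]; simp
      nlinarith [Real.exp_pos (r * A)]
    nlinarith [Real.exp_pos (r * A)]

set_option maxHeartbeats 1000000 in
theorem stmt_4 (p : ℝ) (hp : 1 < p) :
    (∀ t : ℝ, HasDerivAt (fun s : ℝ => (1 + s ^ 2) ^ (p / 2) - 1)
      (p * t * (1 + t ^ 2) ^ ((p - 2) / 2)) t) ∧
    ∃ C : ℝ, 0 < C ∧ ∀ t : ℝ, 0 ≤ t →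
      Vp (p / (p - 1)) (p * t * (1 + t ^ 2) ^ ((p - 2) / 2)) ≤ C * Vp p t := by
  constructor
  · intro t
    have h1 : (0:ℝ) < 1 + t ^ 2 := by positivity
    have hd : HasDerivAt (fun s : ℝ => 1 + s ^ 2) (2 * t) t := by
      simpa using ((hasDerivAt_pow 2 t).const_add 1)
    have h := (hd.rpow_const (p := p / 2) (Or.inl h1.ne')).sub_const 1
    have h2 : 2 * t * (p / 2) * (1 + t ^ 2) ^ (p / 2 - 1)
        = p * t * (1 + t ^ 2) ^ ((p - 2) / 2) := by
      have he : p / 2 - 1 = (p - 2) / 2 := by ring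
      rw [he]; ring
    rw [h2] at h
    exact h
  ·

    have hp1 : 0 < p - 1 := by linarith
    have hp0 : 0 < p := by linarith
    set r : ℝ := p / (2 * (p - 1)) with hrdef
    have hr0 : 0 < r := by positivity
    set K : ℝ := p ^ 2 * (2:ℝ) ^ p with hKdef
    have hK0 : 0 < K := by positivity
    have hKr : 0 < (1 + K) ^ r := Real.rpow_pos_of_pos (by linarith) r
    have hpr : 0 < ((1:ℝ) + p ^ 2) ^ r := Real.rpow_pos_of_pos (by positivity) r
    set c1 : ℝ := 3 * r * K * (1 + K) ^ r with hc1def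
    have hc1 : 0 < c1 := by positivity
    refine ⟨c1 + 4 * (1 + p ^ 2) ^ r, by positivity, ?_⟩
    intro t ht
    set u : ℝ := 1 + t ^ 2 with hudef
    have hu0 : (0:ℝ) < u := by positivity
    have hu1 : (1:ℝ) ≤ u := by nlinarith
    have hqr : p / (p - 1) / 2 = r := by rw [hrdef, div_div, mul_comm]
    have hsq : (p * t * u ^ ((p - 2) / 2)) ^ 2 = p ^ 2 * t ^ 2 * u ^ (p - 2) := by
      have h2 : (u ^ ((p - 2) / 2)) ^ (2:ℕ) = u ^ (p - 2) := by
        rw [← Real.rpow_natCast (u ^ ((p - 2) / 2)) 2, ← Real.rpow_mul hu0.le]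
        norm_num
      calc (p * t * u ^ ((p - 2) / 2)) ^ 2
          = p ^ 2 * t ^ 2 * (u ^ ((p - 2) / 2)) ^ (2:ℕ) := by ring
        _ = p ^ 2 * t ^ 2 * u ^ (p - 2) := by rw [h2]
    set A : ℝ := p ^ 2 * t ^ 2 * u ^ (p - 2) with hAdef
    have hA0 : 0 ≤ A := by positivity
    have h1A : (0:ℝ) < 1 + A := by linarith
    simp only [Vp, hsq, hqr]
    have hR0 : 0 ≤ u ^ (p / 2) - 1 := by
      have := Real.one_le_rpow hu1 (by positivity : (0:ℝ) ≤ p / 2)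
      linarith
    have hbern := bern_aux r A hr0.le hA0
    rcases le_or_gt t 1 with htle | htgt
    · -- small t case
      have hu2 : u ≤ 2 := by nlinarith
      have hup : u ^ (p - 2) ≤ (2:ℝ) ^ p := by
        rcases le_or_gt 2 p with h2p | h2p
        · calc u ^ (p - 2) ≤ (2:ℝ) ^ (p - 2) :=
                Real.rpow_le_rpow hu0.le hu2 (by linarith)
            _ ≤ (2:ℝ) ^ p := Real.rpow_le_rpow_of_exponent_le one_le_two (by linarith)
        · calc u ^ (p - 2) ≤ 1 := Real.rpow_le_one_of_one_le_of_nonpos hu1 (by linarith)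
            _ ≤ (2:ℝ) ^ p := Real.one_le_rpow one_le_two hp0.le
      have hAK : A ≤ K * t ^ 2 := by
        have h := mul_le_mul_of_nonneg_left hup (show (0:ℝ) ≤ p ^ 2 * t ^ 2 by positivity)
        calc A = p ^ 2 * t ^ 2 * u ^ (p - 2) := hAdef
          _ ≤ p ^ 2 * t ^ 2 * (2:ℝ) ^ p := h
          _ = K * t ^ 2 := by rw [hKdef]; ring
      have hAK1 : A ≤ K := by nlinarith
      have hmono : (1 + A) ^ r ≤ (1 + K) ^ r :=
        Real.rpow_le_rpow h1A.le (by linarith) hr0.le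
      have hsqrt : 1 + t ^ 2 / 3 ≤ u ^ ((1:ℝ)/2) := by
        rw [← Real.sqrt_eq_rpow]
        rw [show ((1:ℝ) + t ^ 2 / 3) = Real.sqrt ((1 + t ^ 2 / 3) ^ 2) from
          (Real.sqrt_sq (by positivity)).symm]
        apply Real.sqrt_le_sqrt
        nlinarith
      have hhalf : u ^ ((1:ℝ)/2) ≤ u ^ (p / 2) :=
        Real.rpow_le_rpow_of_exponent_le hu1 (by linarith)
      have hRlow : t ^ 2 / 3 ≤ u ^ (p / 2) - 1 := by linarith
      have hF : (1 + A) ^ r - 1 ≤ c1 * (t ^ 2 / 3) := by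
        have hstep : r * A * (1 + A) ^ r ≤ r * (K * t ^ 2) * (1 + K) ^ r :=
          mul_le_mul (by nlinarith) hmono (Real.rpow_nonneg h1A.le r) (by positivity)
        calc (1 + A) ^ r - 1 ≤ r * A * (1 + A) ^ r := hbern
          _ ≤ r * (K * t ^ 2) * (1 + K) ^ r := hstep
          _ = c1 * (t ^ 2 / 3) := by rw [hc1def]; ring
      have hmul := mul_le_mul_of_nonneg_left hRlow hc1.le
      have hnn : 0 ≤ 4 * (1 + p ^ 2) ^ r * (u ^ (p / 2) - 1) := by positivity
      nlinarith
    · -- large t case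
      have hu2 : (2:ℝ) ≤ u := by nlinarith
      have hupm : u ^ (p - 2) * u = u ^ (p - 1) := by
        rw [← Real.rpow_add_one hu0.ne']
        congr 1
        ring
      have hup1 : (1:ℝ) ≤ u ^ (p - 1) := Real.one_le_rpow hu1 (by linarith)
      have hAle : A ≤ p ^ 2 * u ^ (p - 1) := by
        have ht2 : t ^ 2 ≤ u := by nlinarith
        have hu2nn : 0 ≤ u ^ (p - 2) := Real.rpow_nonneg hu0.le _
        calc A = p ^ 2 * (t ^ 2 * u ^ (p - 2)) := by rw [hAdef]; ring
          _ ≤ p ^ 2 * (u * u ^ (p - 2)) := by nlinarith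
          _ = p ^ 2 * u ^ (p - 1) := by rw [mul_comm u, hupm]
      have h1Ale : 1 + A ≤ (1 + p ^ 2) * u ^ (p - 1) := by nlinarith
      have he : (p - 1) * r = p / 2 := by
        rw [hrdef]
        field_simp
      have hpow : ((1 + p ^ 2) * u ^ (p - 1)) ^ r = (1 + p ^ 2) ^ r * u ^ (p / 2) := by
        rw [Real.mul_rpow (by positivity) (Real.rpow_nonneg hu0.le _),
          ← Real.rpow_mul hu0.le, he]
      have hF : (1 + A) ^ r ≤ (1 + p ^ 2) ^ r * u ^ (p / 2) := by
        rw [← hpow]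
        exact Real.rpow_le_rpow h1A.le h1Ale hr0.le
      have h43 : (4:ℝ)/3 ≤ u ^ (p / 2) := by
        have h1 : ((4:ℝ)/3) ≤ (2:ℝ) ^ ((1:ℝ)/2) := by
          rw [← Real.sqrt_eq_rpow]
          rw [show ((4:ℝ)/3) = Real.sqrt ((4/3) ^ 2) from (Real.sqrt_sq (by norm_num)).symm]
          apply Real.sqrt_le_sqrt; norm_num
        calc ((4:ℝ)/3) ≤ (2:ℝ) ^ ((1:ℝ)/2) := h1
          _ ≤ (2:ℝ) ^ (p/2) := Real.rpow_le_rpow_of_exponent_le one_le_two (by linarith)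
          _ ≤ u ^ (p/2) := Real.rpow_le_rpow (by norm_num) hu2 (by positivity)
      have hkey : 0 ≤ (1 + p ^ 2) ^ r * (3 * u ^ (p / 2) - 4) := by
        apply mul_nonneg hpr.le; linarith
      have hc1R : 0 ≤ c1 * (u ^ (p / 2) - 1) := mul_nonneg hc1.le hR0
      nlinarith
end

section
/- For 1 < p < 2 define the truncation T_p : ℝ^N → ℝ^N by T_p(z) = z if |z| ≤ 1 and T_p(z) = |z|^{p-2} z if |z| > 1. Then there are constants c_1(p), c_2(p) > 0 such that ⟨T_p(z), z⟩ ≥ c_1 V_p(z) and V_{p'}(T_p(z)) ≤ c_2 V_p(z) for all z ∈ ℝ^N, where p' = p/(p-1). -/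
open scoped RealInnerProductSpace

/-- Truncation operator `T_p` on `ℝ^N` for `1 < p < 2`. -/
noncomputable def Tp {N : ℕ} (p : ℝ) (z : EuclideanSpace ℝ (Fin N)) :
    EuclideanSpace ℝ (Fin N) :=
  if ‖z‖ ≤ 1 then z else ‖z‖ ^ (p - 2) • z

lemma chord_concave {b x : ℝ} (hb0 : 0 ≤ b) (hb1 : b ≤ 1) (hx : 0 ≤ x) (hx1 : x ≤ 1) :
    1 + ((2:ℝ) ^ b - 1) * x ≤ (1 + x) ^ b := by
  have h := (Real.concaveOn_rpow hb0 hb1).2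
    (Set.mem_Ici.mpr (by norm_num : (0:ℝ) ≤ 1))
    (Set.mem_Ici.mpr (by norm_num : (0:ℝ) ≤ 2))
    (show (0:ℝ) ≤ 1 - x by linarith) hx (show (1 - x) + x = 1 by ring)
  simp only [smul_eq_mul, Real.one_rpow] at h
  have e : (1 - x) * 1 + x * 2 = 1 + x := by ring
  rw [e] at h
  linarith

lemma chord_convex {a x : ℝ} (ha : 1 ≤ a) (hx : 0 ≤ x) (hx1 : x ≤ 1) :
    (1 + x) ^ a ≤ 1 + ((2:ℝ) ^ a - 1) * x := by
  have h := (convexOn_rpow ha).2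
    (Set.mem_Ici.mpr (by norm_num : (0:ℝ) ≤ 1))
    (Set.mem_Ici.mpr (by norm_num : (0:ℝ) ≤ 2))
    (show (0:ℝ) ≤ 1 - x by linarith) hx (show (1 - x) + x = 1 by ring)
  simp only [smul_eq_mul, Real.one_rpow] at h
  have e : (1 - x) * 1 + x * 2 = 1 + x := by ring
  rw [e] at h
  linarith

lemma Vp_nonneg (p t : ℝ) (hp : 0 ≤ p) : 0 ≤ Vp p t := by
  have : (1:ℝ) ≤ (1 + t ^ 2) ^ (p / 2) :=
    Real.one_le_rpow (by nlinarith [sq_nonneg t]) (by positivity)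
  simp only [Vp]; linarith

theorem stmt_14 (N : ℕ) (p : ℝ) (hp1 : 1 < p) (hp2 : p < 2) :
    ∃ c₁ c₂ : ℝ, 0 < c₁ ∧ 0 < c₂ ∧
      ∀ z : EuclideanSpace ℝ (Fin N),
        c₁ * Vp p ‖z‖ ≤ ⟪Tp p z, z⟫ ∧
        Vp (p / (p - 1)) ‖Tp p z‖ ≤ c₂ * Vp p ‖z‖ := by
  set q := p / (p - 1) with hq
  have hp0 : 0 < p := by linarith
  have hpm1 : 0 < p - 1 := by linarith
  have hq2 : 2 < q := by
    rw [hq, lt_div_iff₀ hpm1]; linarith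
  have hA : (0:ℝ) < 2 ^ (p/2) - 1 := by
    have h1 : (2:ℝ) ^ (0:ℝ) < 2 ^ (p/2) :=
      Real.rpow_lt_rpow_left_iff (by norm_num) |>.mpr (by linarith)
    rw [Real.rpow_zero] at h1
    linarith
  set A : ℝ := 2 ^ (p/2) - 1 with hAdef
  have hB0 : (0:ℝ) ≤ 2 ^ (q/2) := Real.rpow_nonneg (by norm_num) _
  refine ⟨1/2, 2 ^ (q/2) * (1 + 1/A), by norm_num, by positivity, fun z => ?_⟩
  set t := ‖z‖ with htdef
  have ht0 : 0 ≤ t := norm_nonneg z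
  clear_value A
  by_cases hle : t ≤ 1
  · -- small case
    have hTz : Tp p z = z := by rw [Tp, if_pos hle]
    have hnorm : ‖Tp p z‖ = t := by rw [hTz]
    have hinner : ⟪Tp p z, z⟫ = t ^ 2 := by
      rw [hTz, real_inner_self_eq_norm_sq]
    have hx2 : t ^ 2 ≤ 1 := by nlinarith
    have hVp_lb : A * t ^ 2 ≤ Vp p t := by
      have := chord_concave (b := p/2) (x := t^2) (by positivity) (by linarith) (by positivity) hx2
      rw [hAdef]
      simp only [Vp]; linarith
    have hVq_ub : Vp q t ≤ (2 ^ (q/2) - 1) * t ^ 2 := by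
      have := chord_convex (a := q/2) (x := t^2) (by linarith) (by positivity) hx2
      simp only [Vp]; linarith
    constructor
    · rw [hinner]
      have hVp_ub : Vp p t ≤ t ^ 2 := by
        have h1 : (1 + t^2) ^ (p/2) ≤ (1 + t^2) ^ (1:ℝ) :=
          Real.rpow_le_rpow_of_exponent_le (by nlinarith) (by linarith)
        rw [Real.rpow_one] at h1
        simp only [Vp]; linarith
      nlinarith [Vp_nonneg p t hp0.le]
    · rw [hnorm]
      have h3 : (2:ℝ) ^ (q/2) - 1 ≤ 2 ^ (q/2) * (A + 1) := by nlinarith [mul_nonneg hB0 hA.le]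
      have h2 : 2 ^ (q/2) * (1 + 1/A) * A = 2 ^ (q/2) * (A + 1) := by
        have hAeq : (1 + 1/A) * A = A + 1 := by field_simp [hA.ne']
        rw [mul_assoc, hAeq]
      have h4 : (2 ^ (q/2) - 1) * t ^ 2 ≤ 2 ^ (q/2) * (1 + 1/A) * (A * t^2) := by
        calc (2 ^ (q/2) - 1) * t ^ 2 ≤ 2 ^ (q/2) * (A + 1) * t ^ 2 := by nlinarith [sq_nonneg t]
          _ = 2 ^ (q/2) * (1 + 1/A) * (A * t^2) := by rw [← h2]; ring
      have h5 := mul_le_mul_of_nonneg_left hVp_lb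
        (by positivity : (0:ℝ) ≤ 2 ^ (q/2) * (1 + 1/A))
      linarith
  · -- large case: t > 1
    push_neg at hle
    have ht1 : 0 < t := by linarith
    have hTz : Tp p z = t ^ (p-2) • z := by rw [Tp, if_neg (not_le.mpr hle)]
    have htp : t ^ (p-2) * t ^ (2:ℕ) = t ^ p := by
      rw [← Real.rpow_natCast t 2, ← Real.rpow_add ht1]
      norm_num
    have hinner : ⟪Tp p z, z⟫ = t ^ p := by
      rw [hTz, real_inner_smul_left, real_inner_self_eq_norm_sq, ← htdef, htp]
    have hnorm : ‖Tp p z‖ = t ^ (p-1) := by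
      have e : t ^ (p-2) * t = t ^ (p-1) := by
        rw [← Real.rpow_add_one ht1.ne' (p-2)]
        ring_nf
      rw [hTz, norm_smul, Real.norm_eq_abs, abs_of_pos (Real.rpow_pos_of_pos ht1 _), ← htdef, e]
    have htp1 : 1 ≤ t ^ p := Real.one_le_rpow hle.le hp0.le
    have epow : ∀ r : ℝ, (t ^ r) ^ (2:ℕ) = t ^ (2*r) := by
      intro r
      rw [← Real.rpow_natCast (t ^ r) 2, ← Real.rpow_mul ht1.le]
      congr 1
      push_cast; ring
    have e2 : (t ^ (2:ℕ) : ℝ) ^ (p/2) = t ^ p := by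
      rw [← Real.rpow_natCast t 2, ← Real.rpow_mul ht1.le]
      congr 1
      push_cast; ring
    have hub : (1 + t^2) ^ (p/2) ≤ 2 ^ (p/2) * t ^ p := by
      have h1 : (1 + t^2 : ℝ) ≤ 2 * t^2 := by nlinarith
      have h2 : (1 + t^2 : ℝ) ^ (p/2) ≤ (2 * t^2) ^ (p/2) :=
        Real.rpow_le_rpow (by positivity) h1 (by positivity)
      have h3 : ((2:ℝ) * t^2) ^ (p/2) = 2 ^ (p/2) * t ^ p := by
        rw [Real.mul_rpow (by norm_num) (by positivity), e2]
      linarith [h3 ▸ h2]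
    have hVp_ge_tp : t ^ p - 1 ≤ Vp p t := by
      have h1 : (t:ℝ)^2 ≤ 1 + t^2 := by linarith
      have h2 := Real.rpow_le_rpow (by positivity) h1 (by positivity : (0:ℝ) ≤ p/2)
      rw [e2] at h2
      simp only [Vp]; linarith
    have hVp_ge_A : A ≤ Vp p t := by
      have : (2:ℝ) ^ (p/2) ≤ (1 + t^2) ^ (p/2) :=
        Real.rpow_le_rpow (by norm_num) (by nlinarith) (by positivity)
      simp only [Vp, hAdef]; linarith
    constructor
    · rw [hinner]
      have hV : Vp p t ≤ 2 ^ (p/2) * t ^ p - 1 := by simp only [Vp]; linarith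
      have h2 : (2:ℝ) ^ (p/2) ≤ 2 := by
        have h := Real.rpow_le_rpow_of_exponent_le (x := 2) one_le_two
          (show p/2 ≤ 1 by linarith)
        rwa [Real.rpow_one] at h
      have h8 : (2:ℝ) ^ (p/2) * t ^ p ≤ 2 * t ^ p :=
        mul_le_mul_of_nonneg_right h2 (by positivity)
      linarith
    · rw [hnorm]
      have hkey : Vp q (t ^ (p-1)) ≤ 2 ^ (q/2) * t ^ p := by
        have hsq := epow (p-1)
        have h1 : (1:ℝ) ≤ t ^ (2*(p-1)) := Real.one_le_rpow hle.le (by linarith)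
        have h2 : (1 + t ^ (2*(p-1)) : ℝ) ≤ 2 * t ^ (2*(p-1)) := by linarith
        have h3 : (1 + t ^ (2*(p-1))) ^ (q/2) ≤ (2 * t ^ (2*(p-1))) ^ (q/2) :=
          Real.rpow_le_rpow (by positivity) h2 (by positivity)
        have hexp : 2*(p-1) * (q/2) = p := by
          rw [hq]
          field_simp
        have h4 : ((2:ℝ) * t ^ (2*(p-1))) ^ (q/2) = 2 ^ (q/2) * t ^ p := by
          rw [Real.mul_rpow (by norm_num) (by positivity), ← Real.rpow_mul ht1.le, hexp]
        simp only [Vp, hsq]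
        have h5 : (0:ℝ) < 2 ^ (q/2) * t ^ p := by positivity
        linarith [h4 ▸ h3]
      have htpV : t ^ p ≤ (1 + 1/A) * Vp p t := by
        have h6 : (1:ℝ) ≤ Vp p t / A := (one_le_div hA).mpr hVp_ge_A
        have h7 : (1 + 1/A) * Vp p t = Vp p t + Vp p t / A := by
          rw [add_mul, one_mul, one_div_mul_eq_div]
        rw [h7]; linarith
      have hfin : 2 ^ (q/2) * t ^ p ≤ 2 ^ (q/2) * (1 + 1/A) * Vp p t := by
        calc 2 ^ (q/2) * t ^ p ≤ 2 ^ (q/2) * ((1 + 1/A) * Vp p t) :=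
              mul_le_mul_of_nonneg_left htpV hB0
          _ = 2 ^ (q/2) * (1 + 1/A) * Vp p t := by ring
      linarith
end
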